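/- Let Λ, Λ₀ be positive definite d×d matrices, β₀ ∈ ℝ^d, S a positive definite d×d matrix, t ∈ ℝ^d with t ≠ 0, and Δ a fixed symmetric d×d matrix. For every c₂ > 1 there exists N such that for all n ≥ N: ‖[((1/n)Λ⁻¹Λ₀ + S + (1/n)Δ)⁻¹ − ((1/n)Λ⁻¹Λ₀ + S)⁻¹]·(t + (1/n)Λ⁻¹Λ₀β₀)‖₁ ≤ (c₂/n)·‖S⁻¹‖₁²·‖Δ‖₁·‖t‖₁. -/

import Mathlib

open Matrix

/-- The ℓ¹ norm on `ℝ^d`. -/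
def l1 {d : ℕ} (v : Fin d → ℝ) : ℝ := ∑ i, |v i|

/-- The operator norm of a `d × d` real matrix induced by the ℓ¹ norm,
i.e. the maximum absolute column sum. -/
noncomputable def matL1 {d : ℕ} (A : Matrix (Fin d) (Fin d) ℝ) : ℝ :=
  ⨆ k : Fin d, ∑ i, |A i k|

open Filter

section aux
variable {d : ℕ}

lemma l1_nonneg (v : Fin d → ℝ) : 0 ≤ l1 v :=
  Finset.sum_nonneg fun _ _ => abs_nonneg _

lemma col_le_matL1 (hd : 0 < d) (A : Matrix (Fin d) (Fin d) ℝ) (k : Fin d) :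
    ∑ i, |A i k| ≤ matL1 A := by
  exact le_ciSup (f := fun k : Fin d => ∑ i, |A i k|) (Set.Finite.bddAbove (Set.finite_range _)) k

lemma matL1_nonneg (hd : 0 < d) (A : Matrix (Fin d) (Fin d) ℝ) : 0 ≤ matL1 A :=
  le_trans (Finset.sum_nonneg fun _ _ => abs_nonneg _) (col_le_matL1 hd A ⟨0, hd⟩)

lemma l1_mulVec_le (hd : 0 < d) (A : Matrix (Fin d) (Fin d) ℝ) (v : Fin d → ℝ) :
    l1 (A *ᵥ v) ≤ matL1 A * l1 v := by
  have h1 : l1 (A *ᵥ v) ≤ ∑ k, (∑ i, |A i k|) * |v k| := by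
    unfold l1 Matrix.mulVec dotProduct
    calc ∑ i, |∑ k, A i k * v k| ≤ ∑ i, ∑ k, |A i k * v k| :=
          Finset.sum_le_sum fun i _ => Finset.abs_sum_le_sum_abs _ _
      _ = ∑ k, (∑ i, |A i k|) * |v k| := by
          rw [Finset.sum_comm]
          simp [Finset.sum_mul, abs_mul]
  refine h1.trans ?_
  rw [l1, Finset.mul_sum]
  exact Finset.sum_le_sum fun k _ =>
    mul_le_mul_of_nonneg_right (col_le_matL1 hd A k) (abs_nonneg _)

lemma l1_smul (c : ℝ) (v : Fin d → ℝ) : l1 (c • v) = |c| * l1 v := by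
  simp [l1, abs_mul, Finset.mul_sum]

lemma l1_continuous : Continuous (l1 (d := d)) := by
  unfold l1
  exact continuous_finset_sum _ fun i _ => (continuous_apply i).abs

lemma l1_pos (hd : 0 < d) {v : Fin d → ℝ} (hv : v ≠ 0) : 0 < l1 v := by
  rcases Function.ne_iff.mp hv with ⟨i, hi⟩
  have : 0 < |v i| := abs_pos.mpr hi
  calc (0:ℝ) < |v i| := this
    _ ≤ l1 v := Finset.single_le_sum (f := fun j => |v j|) (fun j _ => abs_nonneg _) (Finset.mem_univ i)

lemma matL1_pos (hd : 0 < d) {A : Matrix (Fin d) (Fin d) ℝ} (hA : A ≠ 0) : 0 < matL1 A := by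
  have : ∃ i k, A i k ≠ 0 := by
    by_contra h
    push_neg at h
    exact hA (by ext i k; exact h i k)
  rcases this with ⟨i, k, hik⟩
  calc (0:ℝ) < |A i k| := abs_pos.mpr hik
    _ ≤ ∑ j, |A j k| := Finset.single_le_sum (f := fun j => |A j k|) (fun j _ => abs_nonneg _) (Finset.mem_univ i)
    _ ≤ matL1 A := col_le_matL1 hd A k

end aux

set_option maxHeartbeats 1000000 in
/-- **Second error term of private Bayesian linear regression.** For every `c₂ > 1` and all
sufficiently large `n`,
`‖[((1/n)Λ⁻¹Λ₀ + S + (1/n)Δ)⁻¹ − ((1/n)Λ⁻¹Λ₀ + S)⁻¹]·(t + (1/n)Λ⁻¹Λ₀β₀)‖₁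
  ≤ (c₂/n)·‖S⁻¹‖₁²·‖Δ‖₁·‖t‖₁`. -/
theorem stmt_14 {d : ℕ} (hd : 0 < d) (Λ Λ₀ S Δ : Matrix (Fin d) (Fin d) ℝ)
    (hΛ : Λ.PosDef) (hΛ₀ : Λ₀.PosDef) (hS : S.PosDef) (hΔ : Δ.IsSymm)
    (β₀ t : Fin d → ℝ) (ht : t ≠ 0) :
    ∀ c₂ : ℝ, 1 < c₂ → ∃ N : ℕ, ∀ n ≥ N,
      l1 ((((n : ℝ)⁻¹ • (Λ⁻¹ * Λ₀) + S + (n : ℝ)⁻¹ • Δ)⁻¹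
            - ((n : ℝ)⁻¹ • (Λ⁻¹ * Λ₀) + S)⁻¹)
          *ᵥ (t + (n : ℝ)⁻¹ • ((Λ⁻¹ * Λ₀) *ᵥ β₀)))
        ≤ (c₂ / n) * matL1 S⁻¹ ^ 2 * matL1 Δ * l1 t := by
  intro c₂ hc₂
  set M := Λ⁻¹ * Λ₀ with hM
  by_cases hΔ0 : Δ = 0
  · refine ⟨0, fun n _ => ?_⟩
    subst hΔ0
    have : Nonempty (Fin d) := ⟨⟨0, hd⟩⟩
    have h1 : (n : ℝ)⁻¹ • M + S + (n:ℝ)⁻¹ • (0 : Matrix (Fin d) (Fin d) ℝ)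
        = (n:ℝ)⁻¹ • M + S := by simp
    rw [h1, sub_self, Matrix.zero_mulVec]
    have hz : matL1 (0 : Matrix (Fin d) (Fin d) ℝ) = 0 := by
      unfold matL1; simp
    have hl0 : l1 (0 : Fin d → ℝ) = 0 := by simp [l1]
    rw [hz, hl0, mul_zero, zero_mul]
  -- main case
  have hdetS : S.det ≠ 0 := ne_of_gt hS.det_pos
  -- constants
  set K := matL1 S⁻¹ ^ 2 * matL1 Δ * l1 t with hK
  have hSinv : (S⁻¹ : Matrix (Fin d) (Fin d) ℝ) ≠ 0 := by
    intro h
    have := Matrix.nonsing_inv_mul S (isUnit_iff_ne_zero.mpr hdetS)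
    rw [h, Matrix.zero_mul] at this
    have : (1 : Matrix (Fin d) (Fin d) ℝ) ⟨0, hd⟩ ⟨0, hd⟩ = 0 := by rw [← this]; rfl
    simp at this
  have hKpos : 0 < K := by
    have h1 := matL1_pos hd hSinv
    have h2 := matL1_pos hd hΔ0
    have h3 := l1_pos hd ht
    positivity
  -- the functions of ε
  set B : ℝ → Matrix (Fin d) (Fin d) ℝ := fun ε => ε • M + S with hB
  set A : ℝ → Matrix (Fin d) (Fin d) ℝ := fun ε => ε • M + S + ε • Δ with hA
  have hBc : Continuous B := (continuous_id.smul continuous_const).add continuous_const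
  have hAc : Continuous A :=
    ((continuous_id.smul continuous_const).add continuous_const).add
      (continuous_id.smul continuous_const)
  have hB0 : B 0 = S := by simp [hB]
  have hA0 : A 0 = S := by simp [hA]
  have hRinv : ContinuousAt Ring.inverse S.det := by
    rw [Ring.inverse_eq_inv']
    exact continuousAt_inv₀ hdetS
  have hinvS : ContinuousAt Inv.inv S := continuousAt_matrix_inv S hRinv
  have hAinv : ContinuousAt (fun ε => (A ε)⁻¹) 0 :=
    ContinuousAt.comp (by rw [hA0]; exact hinvS) (hAc.continuousAt (x := (0:ℝ)))
  have hBinv : ContinuousAt (fun ε => (B ε)⁻¹) 0 :=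
    ContinuousAt.comp (by rw [hB0]; exact hinvS) (hBc.continuousAt (x := (0:ℝ)))
  set v : ℝ → Fin d → ℝ := fun ε => t + ε • (M *ᵥ β₀) with hv
  have hvc : Continuous v := continuous_const.add (continuous_id.smul continuous_const)
  set G : ℝ → ℝ := fun ε => l1 (((A ε)⁻¹ * Δ * (B ε)⁻¹) *ᵥ v ε) with hG
  have hmulVec : Continuous (fun p : Matrix (Fin d) (Fin d) ℝ × (Fin d → ℝ) => p.1 *ᵥ p.2) :=
    Continuous.matrix_mulVec continuous_fst continuous_snd
  have hmat : ContinuousAt (fun ε => (A ε)⁻¹ * Δ * (B ε)⁻¹) 0 :=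
    (hAinv.mul continuousAt_const).mul hBinv
  have hGc : ContinuousAt G 0 :=
    l1_continuous.continuousAt.comp
      ((hmulVec.continuousAt).comp (f := fun ε => ((A ε)⁻¹ * Δ * (B ε)⁻¹, v ε)) (hmat.prodMk (hvc.continuousAt)))
  have hG0 : G 0 ≤ K := by
    have hv0 : v 0 = t := by simp [hv]
    have : G 0 = l1 (S⁻¹ *ᵥ (Δ *ᵥ (S⁻¹ *ᵥ t))) := by
      simp [hG, hA0, hB0, hv0, Matrix.mulVec_mulVec, Matrix.mul_assoc]
    rw [this]
    calc l1 (S⁻¹ *ᵥ (Δ *ᵥ (S⁻¹ *ᵥ t)))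
        ≤ matL1 S⁻¹ * l1 (Δ *ᵥ (S⁻¹ *ᵥ t)) := l1_mulVec_le hd _ _
      _ ≤ matL1 S⁻¹ * (matL1 Δ * l1 (S⁻¹ *ᵥ t)) := by
          exact mul_le_mul_of_nonneg_left (l1_mulVec_le hd _ _) (matL1_nonneg hd _)
      _ ≤ matL1 S⁻¹ * (matL1 Δ * (matL1 S⁻¹ * l1 t)) := by
          refine mul_le_mul_of_nonneg_left (mul_le_mul_of_nonneg_left (l1_mulVec_le hd _ _) (matL1_nonneg hd _)) (matL1_nonneg hd _)
      _ = K := by rw [hK]; ring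
  have hGK : G 0 < c₂ * K := lt_of_le_of_lt hG0 (by nlinarith)
  -- ε_n := (n:ℝ)⁻¹ tends to 0
  have hεlim : Tendsto (fun n : ℕ => (n:ℝ)⁻¹) atTop (nhds 0) :=
    tendsto_inv_atTop_zero.comp tendsto_natCast_atTop_atTop
  have hdetc : Continuous fun m : Matrix (Fin d) (Fin d) ℝ => m.det := Continuous.matrix_det continuous_id
  have hdetA : Tendsto (fun n : ℕ => (A ((n:ℝ)⁻¹)).det) atTop (nhds S.det) := by
    have := (hdetc.comp hAc).continuousAt (x := (0:ℝ))
    have h2 := this.tendsto.comp hεlim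
    simpa [hA0, Function.comp_def] using h2
  have hdetB : Tendsto (fun n : ℕ => (B ((n:ℝ)⁻¹)).det) atTop (nhds S.det) := by
    have := (hdetc.comp hBc).continuousAt (x := (0:ℝ))
    have h2 := this.tendsto.comp hεlim
    simpa [hB0, Function.comp_def] using h2
  have hevA : ∀ᶠ n : ℕ in atTop, (A ((n:ℝ)⁻¹)).det ≠ 0 := hdetA.eventually_ne hdetS
  have hevB : ∀ᶠ n : ℕ in atTop, (B ((n:ℝ)⁻¹)).det ≠ 0 := hdetB.eventually_ne hdetS
  have hGlim : Tendsto (fun n : ℕ => G ((n:ℝ)⁻¹)) atTop (nhds (G 0)) := hGc.tendsto.comp hεlim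
  have hevG : ∀ᶠ n : ℕ in atTop, G ((n:ℝ)⁻¹) ≤ c₂ * K := hGlim.eventually_le_const hGK
  have hev1 : ∀ᶠ n : ℕ in atTop, 1 ≤ n := eventually_ge_atTop 1
  rcases ((hevA.and hevB).and (hevG.and hev1)).exists_forall_of_atTop with ⟨N, hN⟩
  refine ⟨N, fun n hn => ?_⟩
  obtain ⟨⟨hdA, hdB⟩, hGn, hn1⟩ := hN n hn
  have hnpos : (0:ℝ) < n := by exact_mod_cast hn1
  have huA : IsUnit (A ((n:ℝ)⁻¹)).det := isUnit_iff_ne_zero.mpr hdA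
  have huB : IsUnit (B ((n:ℝ)⁻¹)).det := isUnit_iff_ne_zero.mpr hdB
  -- the identity
  have hid : (A ((n:ℝ)⁻¹))⁻¹ - (B ((n:ℝ)⁻¹))⁻¹
      = (A ((n:ℝ)⁻¹))⁻¹ * (B ((n:ℝ)⁻¹) - A ((n:ℝ)⁻¹)) * (B ((n:ℝ)⁻¹))⁻¹ := by
    rw [Matrix.mul_sub, Matrix.sub_mul, Matrix.mul_assoc ((A ((n:ℝ)⁻¹))⁻¹) _ _,
      Matrix.mul_nonsing_inv _ huB, Matrix.mul_one, Matrix.nonsing_inv_mul _ huA, Matrix.one_mul]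
  have hBA : B ((n:ℝ)⁻¹) - A ((n:ℝ)⁻¹) = (-(n:ℝ)⁻¹) • Δ := by
    simp [hA, hB]
  have hlhs : ((A ((n:ℝ)⁻¹))⁻¹ - (B ((n:ℝ)⁻¹))⁻¹) *ᵥ v ((n:ℝ)⁻¹)
      = (-(n:ℝ)⁻¹) • (((A ((n:ℝ)⁻¹))⁻¹ * Δ * (B ((n:ℝ)⁻¹))⁻¹) *ᵥ v ((n:ℝ)⁻¹)) := by
    rw [hid, hBA]
    rw [Matrix.mul_smul, Matrix.smul_mul, Matrix.smul_mulVec]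
  have key : l1 (((A ((n:ℝ)⁻¹))⁻¹ - (B ((n:ℝ)⁻¹))⁻¹) *ᵥ v ((n:ℝ)⁻¹))
      ≤ (n:ℝ)⁻¹ * (c₂ * K) := by
    rw [hlhs, l1_smul]
    rw [abs_neg, abs_inv, Nat.abs_cast]
    exact mul_le_mul_of_nonneg_left hGn (by positivity)
  have hrw : (c₂ / n) * matL1 S⁻¹ ^ 2 * matL1 Δ * l1 t = (n:ℝ)⁻¹ * (c₂ * K) := by
    rw [hK]; field_simp
  rw [hrw]
  exact key
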